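/- For every ε > 0 there exists a constant C = C(ε) > 0 such that for every ε-proximal matrix g ∈ GL_d(ℝ), the logarithm of the spectral radius χ_1(g) = log|eig_1(g)| satisfies log‖g‖ − C ≤ χ_1(g) ≤ log‖g‖, where ‖g‖ is the operator norm. -/

import Mathlib

open Matrix

noncomputable def rho {d : ℕ} (u v : EuclideanSpace ℝ (Fin d)) : ℝ :=
  min (InnerProductGeometry.angle u v) (InnerProductGeometry.angle u (-v))

noncomputable def mApply {d : ℕ} (g : Matrix (Fin d) (Fin d) ℝ)
    (u : EuclideanSpace ℝ (Fin d)) : EuclideanSpace ℝ (Fin d) :=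
  Matrix.toEuclideanLin g u

/-- The ρ-Lipschitz seminorm of the projective action of g, restricted to a set of
directions (given as a set of nonzero representative vectors). -/
noncomputable def rhoNormOn {d : ℕ} (g : Matrix (Fin d) (Fin d) ℝ)
    (S : Set (EuclideanSpace ℝ (Fin d))) : ℝ :=
  sSup {r : ℝ | ∃ u ∈ S, ∃ v ∈ S, u ≠ 0 ∧ v ≠ 0 ∧ rho u v ≠ 0 ∧
    r = rho (mApply g u) (mApply g v) / rho u v}

/-- Characteristic polynomial of the complexification of a real matrix. -/
noncomputable def charpolyC {d : ℕ} (g : Matrix (Fin d) (Fin d) ℝ) : Polynomial ℂ :=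
  Matrix.charpoly (g.map (algebraMap ℝ ℂ))

/-- g is proximal: it has a unique eigenvalue of maximal modulus,
of algebraic multiplicity one. -/
def IsProximal {d : ℕ} (g : Matrix (Fin d) (Fin d) ℝ) : Prop :=
  ∃ lam : ℂ, (charpolyC g).IsRoot lam ∧ Polynomial.rootMultiplicity lam (charpolyC g) = 1 ∧
    ∀ μ : ℂ, (charpolyC g).IsRoot μ → μ ≠ lam → ‖μ‖ < ‖lam‖

/-- The maximal modulus of a (complex) eigenvalue of g. -/
noncomputable def eigMax {d : ℕ} (g : Matrix (Fin d) (Fin d) ℝ) : ℝ :=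
  sSup {r : ℝ | ∃ μ : ℂ, (charpolyC g).IsRoot μ ∧ r = ‖μ‖}

/-- Operator norm of a matrix acting on Euclidean space. -/
noncomputable def opN {d : ℕ} (g : Matrix (Fin d) (Fin d) ℝ) : ℝ :=
  ‖Matrix.toEuclideanCLM (𝕜 := ℝ) g‖

/-- g is ε-proximal: it is proximal, the dominant eigendirection v_g makes angle ≥ 2ε with the
invariant complementary hyperplane V_g^<, g maps the complement of the ε-cone around V_g^<
into the ε-cone around v_g, and is ε-Lipschitz (for ρ) there. -/
def IsEpsProximal {d : ℕ} (ε : ℝ) (g : Matrix (Fin d) (Fin d) ℝ) : Prop :=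
  IsProximal g ∧
  ∃ (v : EuclideanSpace ℝ (Fin d)) (c : ℝ) (W : Submodule ℝ (EuclideanSpace ℝ (Fin d))),
    ‖v‖ = 1 ∧ mApply g v = c • v ∧ |c| = eigMax g ∧
    Module.finrank ℝ W = d - 1 ∧ (∀ w ∈ W, mApply g w ∈ W) ∧ v ∉ W ∧
    (∀ w ∈ W, w ≠ 0 → 2 * ε ≤ rho v w) ∧
    (∀ u : EuclideanSpace ℝ (Fin d), u ≠ 0 → (∀ w ∈ W, w ≠ 0 → ε < rho u w) →
      rho (mApply g u) v ≤ ε) ∧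
    rhoNormOn g {u | u ≠ 0 ∧ ∀ w ∈ W, w ≠ 0 → ε < rho u w} ≤ ε

section Auxiliary

open InnerProductGeometry RealInnerProductSpace Real

lemma rho_le_pi_div_two {d : ℕ} (u v : EuclideanSpace ℝ (Fin d)) : rho u v ≤ π / 2 := by
  unfold rho
  rw [angle_neg_right]
  rcases le_total (angle u v) (π/2) with h | h
  · exact le_trans (min_le_left _ _) h
  · exact le_trans (min_le_right _ _) (by linarith)

lemma abs_inner_le_of_rho_ge {d : ℕ} {u w : EuclideanSpace ℝ (Fin d)} {θ : ℝ}
    (hθ : 0 ≤ θ) (h : θ ≤ rho u w) :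
    |⟪u, w⟫| ≤ Real.cos θ * (‖u‖ * ‖w‖) := by
  have h1 : θ ≤ angle u w := le_trans h (min_le_left _ _)
  have h2 : θ ≤ angle u (-w) := le_trans h (min_le_right _ _)
  have c1 := Real.cos_le_cos_of_nonneg_of_le_pi hθ (angle_le_pi u w) h1
  have c2 := Real.cos_le_cos_of_nonneg_of_le_pi hθ (angle_le_pi u (-w)) h2
  rw [cos_angle] at c1
  rw [cos_angle, inner_neg_right, norm_neg] at c2
  rcases eq_or_lt_of_le (mul_nonneg (norm_nonneg u) (norm_nonneg w)) with h0 | h0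
  · have : u = 0 ∨ w = 0 := by
      rcases mul_eq_zero.mp h0.symm with h' | h'
      exacts [Or.inl (norm_eq_zero.mp h'), Or.inr (norm_eq_zero.mp h')]
    rcases this with rfl | rfl <;> simp
  · rw [div_le_iff₀ h0] at c1 c2
    exact abs_le.mpr ⟨by linarith, c1⟩

lemma lt_rho_of_abs_inner_lt {d : ℕ} {u w : EuclideanSpace ℝ (Fin d)} {θ : ℝ}
    (hθπ : θ ≤ π)
    (h : |⟪u, w⟫| < Real.cos θ * (‖u‖ * ‖w‖)) : θ < rho u w := by
  have h0 : 0 < ‖u‖ * ‖w‖ := by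
    by_contra hc
    push_neg at hc
    have : Real.cos θ * (‖u‖ * ‖w‖) ≤ 0 := by
      rcases le_or_gt (Real.cos θ) 0 with h' | h'
      · nlinarith [mul_nonneg (norm_nonneg u) (norm_nonneg w)]
      · nlinarith
    exact absurd (lt_of_le_of_lt (abs_nonneg _) h) (not_lt.mpr this)
  have key : ∀ z : EuclideanSpace ℝ (Fin d), ‖z‖ = ‖w‖ →
      |⟪u, z⟫| < Real.cos θ * (‖u‖ * ‖w‖) → θ < angle u z := by
    intro z hz hlt
    by_contra hc
    push_neg at hc
    have := Real.cos_le_cos_of_nonneg_of_le_pi (angle_nonneg u z) hθπ hc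
    rw [cos_angle, hz] at this
    rw [le_div_iff₀ h0] at this
    have := le_abs_self ⟪u, z⟫
    linarith
  refine lt_min (key w rfl h) (key (-w) (norm_neg w) ?_)
  rw [inner_neg_right, abs_neg]
  exact h

lemma abs_inner_ge_of_rho_le {d : ℕ} {y v : EuclideanSpace ℝ (Fin d)} {θ : ℝ}
    (hθπ : θ ≤ π)
    (h : rho y v ≤ θ) : Real.cos θ * (‖y‖ * ‖v‖) ≤ |⟪y, v⟫| := by
  rcases eq_or_lt_of_le (mul_nonneg (norm_nonneg y) (norm_nonneg v)) with h0 | h0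
  · rw [← h0]
    simp
  · rcases min_le_iff.mp h with h1 | h1
    · have := Real.cos_le_cos_of_nonneg_of_le_pi (angle_nonneg y v) hθπ h1
      rw [cos_angle] at this
      rw [le_div_iff₀ h0] at this
      exact le_trans this (le_abs_self _)
    · have := Real.cos_le_cos_of_nonneg_of_le_pi (angle_nonneg y (-v)) hθπ h1
      rw [cos_angle, inner_neg_right, norm_neg] at this
      rw [le_div_iff₀ h0, neg_eq_neg_one_mul] at this
      calc Real.cos θ * (‖y‖ * ‖v‖) ≤ -1 * ⟪y, v⟫ := this
        _ ≤ |⟪y, v⟫| := by rw [neg_one_mul]; exact neg_le_abs _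

lemma mApply_eq_clm {d : ℕ} (M : Matrix (Fin d) (Fin d) ℝ) (y : EuclideanSpace ℝ (Fin d)) :
    mApply M y = Matrix.toEuclideanCLM (𝕜 := ℝ) M y := by
  rw [mApply, ← Matrix.coe_toEuclideanCLM_eq_toEuclideanLin]
  rfl

lemma mApply_mul {d : ℕ} (A B : Matrix (Fin d) (Fin d) ℝ) (x : EuclideanSpace ℝ (Fin d)) :
    mApply (A * B) x = mApply A (mApply B x) := by
  rw [mApply_eq_clm, mApply_eq_clm, mApply_eq_clm, _root_.map_mul]
  rfl

lemma mApply_add {d : ℕ} (A : Matrix (Fin d) (Fin d) ℝ) (x y : EuclideanSpace ℝ (Fin d)) :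
    mApply A (x + y) = mApply A x + mApply A y :=
  map_add (Matrix.toEuclideanLin A) x y

lemma mApply_smul {d : ℕ} (A : Matrix (Fin d) (Fin d) ℝ) (a : ℝ) (x : EuclideanSpace ℝ (Fin d)) :
    mApply A (a • x) = a • mApply A x :=
  map_smul (Matrix.toEuclideanLin A) a x

lemma mApply_ne_zero {d : ℕ} (g : GL (Fin d) ℝ) {x : EuclideanSpace ℝ (Fin d)} (hx : x ≠ 0) :
    mApply (↑g : Matrix (Fin d) (Fin d) ℝ) x ≠ 0 := by
  intro h
  apply hx
  have h1 : mApply ((↑g⁻¹ : Matrix (Fin d) (Fin d) ℝ) * (↑g : Matrix (Fin d) (Fin d) ℝ)) x = x := by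
    rw [g.inv_mul]
    rw [mApply_eq_clm, _root_.map_one]
    rfl
  rw [mApply_mul, h] at h1
  rw [← h1, mApply, map_zero]

lemma decomp {d : ℕ} {v : EuclideanSpace ℝ (Fin d)} {W : Submodule ℝ (EuclideanSpace ℝ (Fin d))}
    (hv : v ≠ 0) (hvW : v ∉ W) (hrank : Module.finrank ℝ W = d - 1)
    (x : EuclideanSpace ℝ (Fin d)) : ∃ a : ℝ, ∃ w ∈ W, x = a • v + w := by
  have hnt : Nontrivial (EuclideanSpace ℝ (Fin d)) := nontrivial_of_ne v 0 hv
  have hd : 0 < d := by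
    have := Module.finrank_pos (R := ℝ) (M := EuclideanSpace ℝ (Fin d))
    rwa [finrank_euclideanSpace_fin] at this
  set T := W ⊔ Submodule.span ℝ {v} with hT
  have hvT : v ∈ T :=
    le_sup_right (α := Submodule ℝ (EuclideanSpace ℝ (Fin d)))
      (Submodule.mem_span_singleton_self v)
  have hlt : W < T := lt_of_le_of_ne le_sup_left (fun h => hvW (h ▸ hvT))
  have h1 : Module.finrank ℝ W < Module.finrank ℝ T := Submodule.finrank_lt_finrank_of_lt hlt
  have h2 : Module.finrank ℝ T ≤ d := by
    have := Submodule.finrank_le T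
    rwa [finrank_euclideanSpace_fin] at this
  have h3 : Module.finrank ℝ T = d := by omega
  have hTtop : T = ⊤ := Submodule.eq_top_of_finrank_eq (by rw [h3, finrank_euclideanSpace_fin])
  have hx : x ∈ T := hTtop ▸ Submodule.mem_top
  rcases Submodule.mem_sup.mp hx with ⟨w, hw, z, hz, hxz⟩
  rcases Submodule.mem_span_singleton.mp hz with ⟨a, rfl⟩
  exact ⟨a, w, hw, by rw [← hxz, add_comm]⟩

end Auxiliary

section MainProof

open InnerProductGeometry RealInnerProductSpace Real

set_option maxHeartbeats 1000000 in
/-- For every ε > 0 there is C = C(ε) > 0 such that every ε-proximal g satisfies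
log‖g‖ − C ≤ log|eig₁(g)| ≤ log‖g‖. -/
theorem log_spectral_radius_comparable_log_norm {d : ℕ} (ε : ℝ) (hε : 0 < ε) :
    ∃ C : ℝ, 0 < C ∧ ∀ g : GL (Fin d) ℝ,
      IsEpsProximal ε (↑g : Matrix (Fin d) (Fin d) ℝ) →
        Real.log (opN (↑g : Matrix (Fin d) (Fin d) ℝ)) - C
            ≤ Real.log (eigMax (↑g : Matrix (Fin d) (Fin d) ℝ)) ∧
          Real.log (eigMax (↑g : Matrix (Fin d) (Fin d) ℝ))
            ≤ Real.log (opN (↑g : Matrix (Fin d) (Fin d) ℝ)) := by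
  have hπ : (0:ℝ) < π := Real.pi_pos
  set ε₀ : ℝ := min ε (π/4) with hε₀def
  have hε₀pos : 0 < ε₀ := lt_min hε (by positivity)
  have hε₀le : ε₀ ≤ π/4 := min_le_right _ _
  have hε₀ε : ε₀ ≤ ε := min_le_left _ _
  set τ : ℝ := Real.cos (2*ε₀) with hτdef
  have hτ0 : 0 ≤ τ := Real.cos_nonneg_of_mem_Icc ⟨by linarith, by linarith⟩
  have hτlt : τ < Real.cos ε₀ :=
    Real.cos_lt_cos_of_nonneg_of_le_pi hε₀pos.le (by linarith) (by linarith)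
  have hcos1 : Real.cos ε₀ ≤ 1 := Real.cos_le_one _
  set δ : ℝ := Real.cos ε₀ - τ with hδdef
  have hδpos : 0 < δ := by rw [hδdef]; linarith
  have hδle : δ ≤ 1 := by rw [hδdef]; linarith
  set s₀ : ℝ := δ/4 with hs₀def
  have hs₀pos : 0 < s₀ := by rw [hs₀def]; linarith
  have hs₀le : s₀ ≤ 1/4 := by rw [hs₀def]; linarith
  set K₂ : ℝ := 8/(δ*δ) with hK₂def
  have hK₂pos : 0 < K₂ := by rw [hK₂def]; positivity
  have h1τ : 0 < 1 - τ := by linarith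
  set β : ℝ := Real.sqrt (1 - τ) with hβdef
  have hβpos : 0 < β := Real.sqrt_pos.mpr h1τ
  have hβsq : β^2 = 1 - τ := Real.sq_sqrt h1τ.le
  have hβ1 : β ≤ 1 := by
    rw [hβdef]
    calc Real.sqrt (1-τ) ≤ Real.sqrt 1 := Real.sqrt_le_sqrt (by linarith)
      _ = 1 := Real.sqrt_one
  set K : ℝ := (1 + K₂)/β with hKdef
  have hK1 : 1 ≤ K := by
    rw [hKdef, le_div_iff₀ hβpos]; linarith
  have hKpos : 0 < K := lt_of_lt_of_le one_pos hK1
  clear_value ε₀ τ δ s₀ K₂ β K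
  refine ⟨1 + Real.log K, by have := Real.log_nonneg hK1; linarith, ?_⟩
  intro g hg
  obtain ⟨-, v, c, W, hv1, hgv, hceig, hrankW, hWinv, hvW, h2eps, hcone, -⟩ := hg
  have hv0 : v ≠ 0 := by intro h; rw [h, norm_zero] at hv1; norm_num at hv1
  have hc0 : c ≠ 0 := by
    intro h
    exact mApply_ne_zero g hv0 (by rw [hgv, h, zero_smul])
  have hcpos : 0 < |c| := abs_pos.mpr hc0
  -- upper bound
  have hup : |c| ≤ opN (↑g : Matrix (Fin d) (Fin d) ℝ) := by
    have h1 : ‖mApply (↑g : Matrix (Fin d) (Fin d) ℝ) v‖ = |c| := by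
      rw [hgv, norm_smul, hv1, mul_one, Real.norm_eq_abs]
    have h2 : ‖(Matrix.toEuclideanCLM (𝕜 := ℝ) (↑g : Matrix (Fin d) (Fin d) ℝ)) v‖
        ≤ opN (↑g : Matrix (Fin d) (Fin d) ℝ) * ‖v‖ := ContinuousLinearMap.le_opNorm _ v
    rw [← mApply_eq_clm, h1, hv1, mul_one] at h2
    exact h2
  -- key 1 : inner product bound against W
  have key1 : ∀ w ∈ W, |⟪v, w⟫| ≤ τ * ‖w‖ := by
    intro w hw
    rcases eq_or_ne w 0 with rfl | hw0
    · simp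
    · have h := abs_inner_le_of_rho_ge (u := v) (w := w) (θ := 2*ε₀)
        (by linarith) (le_trans (by linarith) (h2eps w hw hw0))
      rw [hv1, one_mul, ← hτdef] at h
      exact h
  -- key 2 : norm bound on W
  have key2 : ∀ w ∈ W, ‖mApply (↑g : Matrix (Fin d) (Fin d) ℝ) w‖ ≤ K₂ * |c| * ‖w‖ := by
    intro w hw
    rcases eq_or_ne w 0 with rfl | hw0
    · rw [mApply, map_zero]; simp
    · have hwpos : 0 < ‖w‖ := norm_pos_iff.mpr hw0
      have hεπ4 : ε ≤ π/4 := by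
        have h1 := h2eps w hw hw0
        have h2 := rho_le_pi_div_two v w
        linarith
      have hεε₀ : ε₀ = ε := by rw [hε₀def]; exact min_eq_left hεπ4
      have hcosε : 0 < Real.cos ε := Real.cos_pos_of_mem_Ioo ⟨by linarith, by linarith⟩
      have hcos1ε : Real.cos ε ≤ 1 := Real.cos_le_one ε
      have hδeq : δ = Real.cos ε - τ := by rw [hδdef, hεε₀]
      set wn : EuclideanSpace ℝ (Fin d) := ‖w‖⁻¹ • w with hwndef
      have hwnW : wn ∈ W := W.smul_mem _ hw
      have hwn1 : ‖wn‖ = 1 := by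
        rw [hwndef, norm_smul, norm_inv, norm_norm, inv_mul_cancel₀ hwpos.ne']
      have hwn0 : wn ≠ 0 := by
        intro h; rw [h, norm_zero] at hwn1; norm_num at hwn1
      set u : EuclideanSpace ℝ (Fin d) := v + s₀ • wn with hudef
      have hsm : ‖s₀ • wn‖ = s₀ := by
        rw [norm_smul, hwn1, mul_one, Real.norm_eq_abs, abs_of_pos hs₀pos]
      have hunorm : 1 - s₀ ≤ ‖u‖ := by
        have h := norm_sub_norm_le v (-(s₀ • wn))
        rw [sub_neg_eq_add, norm_neg, hsm, hv1] at h
        exact h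
      have hu0 : u ≠ 0 := by
        intro h
        rw [h, norm_zero] at hunorm
        linarith
      have hconeu : ∀ w' ∈ W, w' ≠ 0 → ε < rho u w' := by
        intro w' hw' hw'0
        have hw'pos : 0 < ‖w'‖ := norm_pos_iff.mpr hw'0
        apply lt_rho_of_abs_inner_lt (by linarith)
        have hwn' : |⟪wn, w'⟫| ≤ ‖w'‖ := by
          have h := abs_real_inner_le_norm wn w'
          rwa [hwn1, one_mul] at h
        have hi : ⟪u, w'⟫ = ⟪v, w'⟫ + s₀ * ⟪wn, w'⟫ := by
          rw [hudef, inner_add_left, real_inner_smul_left]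
        have hb : |⟪u, w'⟫| ≤ (τ + s₀) * ‖w'‖ := by
          rw [hi]
          have h2 : |s₀ * ⟪wn, w'⟫| = s₀ * |⟪wn, w'⟫| := by
            rw [abs_mul, abs_of_pos hs₀pos]
          have h3 := key1 w' hw'
          have h4 : s₀ * |⟪wn, w'⟫| ≤ s₀ * ‖w'‖ :=
            mul_le_mul_of_nonneg_left hwn' hs₀pos.le
          calc |⟪v, w'⟫ + s₀ * ⟪wn, w'⟫| ≤ |⟪v, w'⟫| + |s₀ * ⟪wn, w'⟫| := abs_add_le _ _
            _ = |⟪v, w'⟫| + s₀ * |⟪wn, w'⟫| := by rw [h2]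
            _ ≤ τ * ‖w'‖ + s₀ * ‖w'‖ := add_le_add h3 h4
            _ = (τ + s₀) * ‖w'‖ := by ring
        have h5 : τ + s₀ < Real.cos ε * (1 - s₀) := by
          have e1 : s₀ * Real.cos ε ≤ s₀ := mul_le_of_le_one_right hs₀pos.le hcos1ε
          have e2 : Real.cos ε * (1 - s₀) = Real.cos ε - s₀ * Real.cos ε := by ring
          rw [e2]
          linarith [e1, hδpos, hδeq, hs₀def]
        have h4 : Real.cos ε * (1 - s₀) ≤ Real.cos ε * ‖u‖ :=
          mul_le_mul_of_nonneg_left hunorm hcosε.le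
        calc |⟪u, w'⟫| ≤ (τ + s₀) * ‖w'‖ := hb
          _ < (Real.cos ε * (1 - s₀)) * ‖w'‖ := mul_lt_mul_of_pos_right h5 hw'pos
          _ ≤ (Real.cos ε * ‖u‖) * ‖w'‖ := mul_le_mul_of_nonneg_right h4 (norm_nonneg w')
          _ = Real.cos ε * (‖u‖ * ‖w'‖) := mul_assoc _ _ _
      have hrhogu := hcone u hu0 hconeu
      set w' : EuclideanSpace ℝ (Fin d) := mApply (↑g : Matrix (Fin d) (Fin d) ℝ) wn with hw'def
      have hw'W : w' ∈ W := hWinv wn hwnW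
      have hw'0 : w' ≠ 0 := mApply_ne_zero g hwn0
      have hgu : mApply (↑g : Matrix (Fin d) (Fin d) ℝ) u = c • v + s₀ • w' := by
        rw [hudef, mApply_add, mApply_smul, hgv, hw'def]
      have hL3 := abs_inner_ge_of_rho_le (y := mApply (↑g : Matrix (Fin d) (Fin d) ℝ) u)
        (v := v) (θ := ε) (by linarith) hrhogu
      rw [hv1, mul_one] at hL3
      have hiy : ⟪mApply (↑g : Matrix (Fin d) (Fin d) ℝ) u, v⟫ = c + s₀ * ⟪w', v⟫ := by
        rw [hgu, inner_add_left, real_inner_smul_left, real_inner_smul_left,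
          real_inner_self_eq_norm_sq, hv1]
        ring
      have hiyb : |⟪mApply (↑g : Matrix (Fin d) (Fin d) ℝ) u, v⟫| ≤ |c| + s₀ * (τ * ‖w'‖) := by
        rw [hiy]
        have h2 : |⟪w', v⟫| ≤ τ * ‖w'‖ := by
          rw [real_inner_comm]; exact key1 w' hw'W
        have h3 : |s₀ * ⟪w', v⟫| = s₀ * |⟪w', v⟫| := by
          rw [abs_mul, abs_of_pos hs₀pos]
        calc |c + s₀ * ⟪w', v⟫| ≤ |c| + |s₀ * ⟪w', v⟫| := abs_add_le _ _
          _ = |c| + s₀ * |⟪w', v⟫| := by rw [h3]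
          _ ≤ |c| + s₀ * (τ * ‖w'‖) :=
            add_le_add_right (mul_le_mul_of_nonneg_left h2 hs₀pos.le) _
      have hynorm : s₀ * ‖w'‖ - |c| ≤ ‖mApply (↑g : Matrix (Fin d) (Fin d) ℝ) u‖ := by
        have h := norm_sub_norm_le (s₀ • w') (-(c • v))
        rw [sub_neg_eq_add, norm_neg] at h
        have hn1 : ‖s₀ • w'‖ = s₀ * ‖w'‖ := by
          rw [norm_smul, Real.norm_eq_abs, abs_of_pos hs₀pos]
        have hn2 : ‖c • v‖ = |c| := by
          rw [norm_smul, hv1, mul_one, Real.norm_eq_abs]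
        have hcomm : ‖s₀ • w' + c • v‖ = ‖mApply (↑g : Matrix (Fin d) (Fin d) ℝ) u‖ := by
          rw [hgu, add_comm]
        rw [hn1, hn2, hcomm] at h
        exact h
      have h6 : Real.cos ε * (s₀ * ‖w'‖ - |c|)
          ≤ Real.cos ε * ‖mApply (↑g : Matrix (Fin d) (Fin d) ℝ) u‖ :=
        mul_le_mul_of_nonneg_left hynorm hcosε.le
      have h7 : Real.cos ε * (s₀ * ‖w'‖ - |c|) ≤ |c| + s₀ * (τ * ‖w'‖) :=
        le_trans (le_trans h6 hL3) hiyb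
      have hsub : s₀ * δ * ‖w'‖ = s₀ * Real.cos ε * ‖w'‖ - s₀ * τ * ‖w'‖ := by
        rw [hδeq]; ring
      have hcc : Real.cos ε * |c| ≤ |c| := mul_le_of_le_one_left (abs_nonneg c) hcos1ε
      have hmain : s₀ * δ * ‖w'‖ ≤ 2 * |c| := by
        linarith [h7, hsub, hcc, hcpos]
      have hw'b : ‖w'‖ ≤ K₂ * |c| := by
        rw [hK₂def, div_mul_eq_mul_div, le_div_iff₀ (by positivity : (0:ℝ) < δ*δ)]
        have hmain' : (δ/4) * δ * ‖w'‖ ≤ 2 * |c| := by rw [← hs₀def]; exact hmain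
        linarith [hmain']
      have hwrec : w = ‖w‖ • wn := by
        rw [hwndef, smul_smul, mul_inv_cancel₀ hwpos.ne', one_smul]
      calc ‖mApply (↑g : Matrix (Fin d) (Fin d) ℝ) w‖
          = ‖w‖ * ‖w'‖ := by
            conv_lhs => rw [hwrec]
            rw [mApply_smul, hw'def, norm_smul, norm_norm]
        _ ≤ ‖w‖ * (K₂ * |c|) := mul_le_mul_of_nonneg_left hw'b (norm_nonneg w)
        _ = K₂ * |c| * ‖w‖ := by ring
  -- key 3 : global norm bound
  have key3 : ∀ x : EuclideanSpace ℝ (Fin d),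
      ‖mApply (↑g : Matrix (Fin d) (Fin d) ℝ) x‖ ≤ K * |c| * ‖x‖ := by
    intro x
    obtain ⟨a, w, hwW, rfl⟩ := decomp hv0 hvW hrankW x
    have hgx : mApply (↑g : Matrix (Fin d) (Fin d) ℝ) (a • v + w)
        = a • (c • v) + mApply (↑g : Matrix (Fin d) (Fin d) ℝ) w := by
      rw [mApply_add, mApply_smul, hgv]
    have hn : ‖mApply (↑g : Matrix (Fin d) (Fin d) ℝ) (a • v + w)‖
        ≤ |a| * |c| + K₂ * |c| * ‖w‖ := by
      rw [hgx]
      refine le_trans (norm_add_le _ _) ?_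
      have h1 : ‖a • (c • v)‖ = |a| * |c| := by
        rw [norm_smul, norm_smul, hv1, mul_one, Real.norm_eq_abs, Real.norm_eq_abs]
      rw [h1]
      exact add_le_add_right (key2 w hwW) _
    have hxsq : (1 - τ) * (a^2 + ‖w‖^2) ≤ ‖a • v + w‖^2 := by
      have hexp := norm_add_sq_real (a • v) w
      have h1 : ‖a • v‖ = |a| := by rw [norm_smul, hv1, mul_one, Real.norm_eq_abs]
      have h2 : ⟪a • v, w⟫ = a * ⟪v, w⟫ := real_inner_smul_left _ _ _
      rw [h1, h2, sq_abs] at hexp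
      have h3 := key1 w hwW
      have h4 : |a * ⟪v, w⟫| ≤ |a| * (τ * ‖w‖) := by
        rw [abs_mul]; exact mul_le_mul_of_nonneg_left h3 (abs_nonneg a)
      have h6 : -(|a| * (τ * ‖w‖)) ≤ a * ⟪v, w⟫ := by
        have := neg_abs_le (a * ⟪v, w⟫); linarith
      have hτ2 : τ * (2 * |a| * ‖w‖) ≤ τ * (a^2 + ‖w‖^2) := by
        have h5 := mul_le_mul_of_nonneg_left (two_mul_le_add_sq |a| ‖w‖) hτ0
        rwa [sq_abs] at h5
      linarith [hexp, hτ2, h6]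
    have hsq : ∀ t : ℝ, 0 ≤ t → t^2 * (1 - τ) ≤ ‖a • v + w‖^2 → t * β ≤ ‖a • v + w‖ := by
      intro t ht h
      have h1 : (t*β)^2 ≤ ‖a • v + w‖^2 := by rw [mul_pow, hβsq]; exact h
      calc t*β = Real.sqrt ((t*β)^2) := (Real.sqrt_sq (by positivity)).symm
        _ ≤ Real.sqrt (‖a • v + w‖^2) := Real.sqrt_le_sqrt h1
        _ = ‖a • v + w‖ := Real.sqrt_sq (norm_nonneg _)
    have ha : |a| * β ≤ ‖a • v + w‖ := by
      refine hsq |a| (abs_nonneg a) ?_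
      rw [sq_abs]
      have h0 : (0:ℝ) ≤ (1 - τ) * ‖w‖^2 := mul_nonneg h1τ.le (sq_nonneg _)
      linarith [hxsq, h0]
    have hwb : ‖w‖ * β ≤ ‖a • v + w‖ := by
      refine hsq ‖w‖ (norm_nonneg w) ?_
      have h0 : (0:ℝ) ≤ (1 - τ) * a^2 := mul_nonneg h1τ.le (sq_nonneg _)
      linarith [hxsq, h0]
    have hKβ : K * β = 1 + K₂ := by
      rw [hKdef]; field_simp
    have hA : |c| * (|a| * β) ≤ |c| * ‖a • v + w‖ :=
      mul_le_mul_of_nonneg_left ha hcpos.le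
    have hB : (K₂ * |c|) * (‖w‖ * β) ≤ (K₂ * |c|) * ‖a • v + w‖ :=
      mul_le_mul_of_nonneg_left hwb (by positivity)
    have h1 : (|a| * |c| + K₂ * |c| * ‖w‖) * β ≤ (1 + K₂) * (|c| * ‖a • v + w‖) := by
      linarith [hA, hB]
    have h2 : (|a| * |c| + K₂ * |c| * ‖w‖) * β ≤ (K * |c| * ‖a • v + w‖) * β := by
      calc (|a| * |c| + K₂ * |c| * ‖w‖) * β ≤ (1 + K₂) * (|c| * ‖a • v + w‖) := h1
        _ = (K * |c| * ‖a • v + w‖) * β := by rw [← hKβ]; ring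
    have h3 := le_of_mul_le_mul_right h2 hβpos
    linarith [hn, h3]
  have hopN : opN (↑g : Matrix (Fin d) (Fin d) ℝ) ≤ K * |c| := by
    unfold opN
    apply ContinuousLinearMap.opNorm_le_bound _ (by positivity)
    intro x
    rw [← mApply_eq_clm]
    exact key3 x
  have hopNpos : 0 < opN (↑g : Matrix (Fin d) (Fin d) ℝ) := lt_of_lt_of_le hcpos hup
  rw [← hceig]
  constructor
  · have h1 : Real.log (opN (↑g : Matrix (Fin d) (Fin d) ℝ)) ≤ Real.log (K * |c|) :=
      Real.log_le_log hopNpos hopN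
    rw [Real.log_mul hKpos.ne' hcpos.ne'] at h1
    linarith
  · exact Real.log_le_log hcpos hup

end MainProof
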